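/- Let ν ∈ ℝ and κ = 0. Define Ψ_M(r) := r^{−iν}·(1, −i) and Ψ_U(r) := r^{iν}·(1, i) for r > 0. Then Ψ_M and Ψ_U both satisfy d^{ν,0}Ψ = 0 on (0,∞), and every differentiable function f : (0,∞) → ℂ² with d^{ν,0}f = 0 on (0,∞) is of the form f = a·Ψ_M + b·Ψ_U for some constants a, b ∈ ℂ. -/

import Mathlib

open Complex

/-- `IsDiracSol ν κ lam f₁ f₂` says that `f = (f₁, f₂) : (0,∞) → ℂ²` is differentiable on
`(0,∞)` and satisfies the Coulomb–Dirac equation `d^{ν,κ} f = lam • f` there. -/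
def IsDiracSol (ν κ : ℝ) (lam : ℂ) (f₁ f₂ : ℝ → ℂ) : Prop :=
  ∀ r : ℝ, 0 < r →
    DifferentiableAt ℝ f₁ r ∧ DifferentiableAt ℝ f₂ r ∧
    -((ν : ℂ) / (r : ℂ)) * f₁ r - deriv f₂ r - ((κ : ℂ) / (r : ℂ)) * f₂ r = lam * f₁ r ∧
    deriv f₁ r - ((κ : ℂ) / (r : ℂ)) * f₁ r - ((ν : ℂ) / (r : ℂ)) * f₂ r = lam * f₂ r

/-- For `r > 0` and `γ ∈ ℂ`, `r^γ := exp (γ · ln r)`. -/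
noncomputable def rpowC (r : ℝ) (γ : ℂ) : ℂ := Complex.exp (γ * Real.log r)

lemma hasDerivAt_rpowC (γ : ℂ) {r : ℝ} (hr : 0 < r) :
    HasDerivAt (fun s : ℝ => rpowC s γ) (γ / r * rpowC r γ) r := by
  have hlog : HasDerivAt (fun s : ℝ => ((Real.log s : ℂ))) (((r : ℝ)⁻¹ : ℝ) : ℂ) r :=
    (Real.hasDerivAt_log hr.ne').ofReal_comp
  have h := ((hlog.const_mul γ).cexp)
  convert h using 1
  unfold rpowC
  push_cast
  have : (r : ℂ) ≠ 0 := by exact_mod_cast hr.ne'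
  field_simp
  simp only [rpowC, Complex.ofReal_inv]
  ring

lemma rpowC_one (γ : ℂ) : rpowC 1 γ = 1 := by
  simp [rpowC]

lemma rpowC_mul_neg (r : ℝ) (γ : ℂ) : rpowC r γ * rpowC r (-γ) = 1 := by
  rw [rpowC, rpowC, ← Complex.exp_add]
  ring_nf
  exact Complex.exp_zero

lemma const_of_hasDerivAt_zero {F : ℝ → ℂ} (h : ∀ r : ℝ, 0 < r → HasDerivAt F 0 r) :
    ∀ r : ℝ, 0 < r → F r = F 1 := by
  intro r hr
  refine (convex_Ioi (0:ℝ)).is_const_of_fderivWithin_eq_zero (f := F)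
    (fun x hx => ((h x hx).differentiableAt).differentiableWithinAt) ?_
    (Set.mem_Ioi.2 hr) (Set.mem_Ioi.2 one_pos)
  intro x hx
  rw [fderivWithin_of_isOpen isOpen_Ioi hx]
  rw [(h x hx).hasFDerivAt.fderiv]
  ext
  simp

/-- For `κ = 0`, the functions `Ψ_M(r) = r^{−iν}·(1, −i)` and `Ψ_U(r) = r^{iν}·(1, i)` solve
`d^{ν,0}Ψ = 0` on `(0,∞)`, and every differentiable solution of `d^{ν,0}f = 0` on `(0,∞)` is
a linear combination of them. -/
theorem fundamental_solutions_kappa_zero (ν : ℝ) :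
    IsDiracSol ν 0 0 (fun r => rpowC r (-(I * (ν : ℂ))))
      (fun r => rpowC r (-(I * (ν : ℂ))) * (-I)) ∧
    IsDiracSol ν 0 0 (fun r => rpowC r (I * (ν : ℂ)))
      (fun r => rpowC r (I * (ν : ℂ)) * I) ∧
    ∀ f₁ f₂ : ℝ → ℂ, IsDiracSol ν 0 0 f₁ f₂ →
      ∃ a b : ℂ, ∀ r : ℝ, 0 < r →
        f₁ r = a * rpowC r (-(I * (ν : ℂ))) + b * rpowC r (I * (ν : ℂ)) ∧
        f₂ r = a * (rpowC r (-(I * (ν : ℂ))) * (-I)) + b * (rpowC r (I * (ν : ℂ)) * I) := by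
  refine ⟨?_, ?_, ?_⟩
  · intro r hr
    have hr' : (r : ℂ) ≠ 0 := by exact_mod_cast hr.ne'
    have hp := hasDerivAt_rpowC (-(I * (ν : ℂ))) hr
    have hp2 := hp.mul_const (-I)
    refine ⟨hp.differentiableAt, hp2.differentiableAt, ?_, ?_⟩
    · rw [hp2.deriv]
      field_simp
      ring_nf
      simp [Complex.I_sq]
    · rw [hp.deriv]
      field_simp
      ring_nf
      simp
  · intro r hr
    have hr' : (r : ℂ) ≠ 0 := by exact_mod_cast hr.ne'
    have hp := hasDerivAt_rpowC (I * (ν : ℂ)) hr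
    have hp2 := hp.mul_const I
    refine ⟨hp.differentiableAt, hp2.differentiableAt, ?_, ?_⟩
    · rw [hp2.deriv]
      field_simp
      ring_nf
      simp [Complex.I_sq]
    · rw [hp.deriv]
      field_simp
      ring_nf
      simp
  · intro f₁ f₂ hsol
    refine ⟨(f₁ 1 + I * f₂ 1) / 2, (f₁ 1 - I * f₂ 1) / 2, ?_⟩
    have hGd : ∀ r : ℝ, 0 < r →
        HasDerivAt (fun s => (f₁ s + I * f₂ s) * rpowC s (I * (ν : ℂ))) 0 r := by
      intro r hr
      obtain ⟨h1, h2, e1, e2⟩ := hsol r hr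
      push_cast at e1 e2
      have hr' : (r : ℂ) ≠ 0 := by exact_mod_cast hr.ne'
      have hd2 : deriv f₂ r = -((ν : ℂ) / r) * f₁ r := by linear_combination -e1
      have hd1 : deriv f₁ r = ((ν : ℂ) / r) * f₂ r := by linear_combination e2
      have hq := hasDerivAt_rpowC (I * (ν : ℂ)) hr
      have hgd : HasDerivAt (fun s => f₁ s + I * f₂ s)
          (deriv f₁ r + I * deriv f₂ r) r :=
        h1.hasDerivAt.add ((h2.hasDerivAt).const_mul I)
      have hmul := hgd.mul hq
      refine hmul.congr_deriv (Eq.symm ?_)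
      rw [hd1, hd2]
      linear_combination (-(((ν : ℂ)/r) * f₂ r * rpowC r (I * (ν : ℂ)))) * Complex.I_sq
    have hHd : ∀ r : ℝ, 0 < r →
        HasDerivAt (fun s => (f₁ s - I * f₂ s) * rpowC s (-(I * (ν : ℂ)))) 0 r := by
      intro r hr
      obtain ⟨h1, h2, e1, e2⟩ := hsol r hr
      push_cast at e1 e2
      have hr' : (r : ℂ) ≠ 0 := by exact_mod_cast hr.ne'
      have hd2 : deriv f₂ r = -((ν : ℂ) / r) * f₁ r := by linear_combination -e1
      have hd1 : deriv f₁ r = ((ν : ℂ) / r) * f₂ r := by linear_combination e2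
      have hq := hasDerivAt_rpowC (-(I * (ν : ℂ))) hr
      have hgd : HasDerivAt (fun s => f₁ s - I * f₂ s)
          (deriv f₁ r - I * deriv f₂ r) r :=
        h1.hasDerivAt.sub ((h2.hasDerivAt).const_mul I)
      have hmul := hgd.mul hq
      refine hmul.congr_deriv (Eq.symm ?_)
      rw [hd1, hd2]
      linear_combination (-(((ν : ℂ)/r) * f₂ r * rpowC r (-(I * (ν : ℂ))))) * Complex.I_sq
    intro r hr
    have hG := const_of_hasDerivAt_zero hGd r hr
    have hH := const_of_hasDerivAt_zero hHd r hr
    rw [rpowC_one, mul_one] at hG hH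
    have hm := rpowC_mul_neg r (I * (ν : ℂ))
    have hA : f₁ r + I * f₂ r
        = 2 * ((f₁ 1 + I * f₂ 1) / 2) * rpowC r (-(I * (ν : ℂ))) := by
      linear_combination rpowC r (-(I * (ν : ℂ))) * hG - (f₁ r + I * f₂ r) * hm
    have hB : f₁ r - I * f₂ r
        = 2 * ((f₁ 1 - I * f₂ 1) / 2) * rpowC r (I * (ν : ℂ)) := by
      linear_combination rpowC r (I * (ν : ℂ)) * hH - (f₁ r - I * f₂ r) * hm
    constructor
    · linear_combination (1/2 : ℂ) * hA + (1/2 : ℂ) * hB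
    · linear_combination (-I/2) * hA + (I/2) * hB + f₂ r * Complex.I_sq
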